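/- arXiv:2407.00240 — 2 statements merged into one kernel-verified Lean document; each statement's English description precedes it below -/
import Mathlib

section
/- Let g₁, g₂ : ℝ → ℂ be integrable and bounded, and define f₁(x) := (1/(2π))·∫_ℝ g₁(y)·e^{−i·x·y} dy and f₂(x) := (1/(2π))·∫_ℝ g₂(y)·e^{−i·x·y} dy, assumed real-valued. Then the transformed covariance satisfies τ(f₁,f₂) = (1/(4π²))·∫_{ℝ²} g₁(y)·g₂(z)·(e^{−y·z·σij} − 1)·e^{−(y²·σii + z²·σjj)/2} dy dz. -/
open MeasureTheory Real

/-- Centered bivariate Gaussian density with covariance entries `σii, σjj, σij`. -/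
noncomputable def gaussPDF2 (σii σjj σij : ℝ) (x w : ℝ) : ℝ :=
  (1 / (2 * π * Real.sqrt (σii * σjj - σij ^ 2))) *
    Real.exp (-(σjj * x ^ 2 - 2 * σij * x * w + σii * w ^ 2) / (2 * (σii * σjj - σij ^ 2)))

/-- Centered univariate Gaussian density with variance `σ`. -/
noncomputable def gaussPDF1 (σ x : ℝ) : ℝ :=
  (1 / Real.sqrt (2 * π * σ)) * Real.exp (-x ^ 2 / (2 * σ))

/-- Transformed mean `ν(f)`. -/
noncomputable def transMean (σ : ℝ) (f : ℝ → ℝ) : ℝ := ∫ x : ℝ, f x * gaussPDF1 σ x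

/-- Transformed covariance `τ(f, g)`. -/
noncomputable def transCov (σii σjj σij : ℝ) (f g : ℝ → ℝ) : ℝ :=
  (∫ q : ℝ × ℝ, f q.1 * g q.2 * gaussPDF2 σii σjj σij q.1 q.2) -
    transMean σii f * transMean σjj g

lemma gauss1_nonneg (σ x : ℝ) : 0 ≤ gaussPDF1 σ x := by
  unfold gaussPDF1; positivity

lemma gauss1_continuous (σ : ℝ) : Continuous (gaussPDF1 σ) := by
  unfold gaussPDF1; fun_prop

lemma gauss1_integrable {σ : ℝ} (hσ : 0 < σ) : Integrable (gaussPDF1 σ) := by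
  have h : Integrable (fun x : ℝ => Real.exp (-(1/(2*σ)) * x ^ 2)) :=
    integrable_exp_neg_mul_sq (by positivity)
  refine (h.const_mul (1 / Real.sqrt (2 * π * σ))).congr ?_
  filter_upwards with x
  unfold gaussPDF1
  congr 1
  ring_nf

lemma ofReal_integral' {α : Type*} [MeasurableSpace α] (μ : MeasureTheory.Measure α) (f : α → ℝ) :
    ((∫ x, f x ∂μ : ℝ) : ℂ) = ∫ x, (f x : ℂ) ∂μ := (integral_ofReal (𝕜 := ℂ)).symm

lemma normK (a b : ℝ) : ‖Complex.exp (-Complex.I * a * b)‖ = 1 := by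
  rw [show -Complex.I * a * b = ((-(a*b) : ℝ) : ℂ) * Complex.I by push_cast; ring]
  exact Complex.norm_exp_ofReal_mul_I _

lemma gauss1_fourier {σ : ℝ} (hσ : 0 < σ) (c : ℝ) :
    ∫ x : ℝ, Complex.exp (-Complex.I * x * c) * (gaussPDF1 σ x : ℂ)
      = Complex.exp (-(σ * c ^ 2 / 2 : ℝ)) := by
  have hb : (0:ℝ) < 1 / (2 * σ) := by positivity
  have key := fourierIntegral_gaussian (b := ((1/(2*σ) : ℝ) : ℂ)) (by simpa using hb) (-(c:ℂ))
  have h1 : (fun x : ℝ => Complex.exp (-Complex.I * x * c) * (gaussPDF1 σ x : ℂ))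
      = fun x : ℝ => ((1 / Real.sqrt (2*π*σ) : ℝ) : ℂ) *
        (Complex.exp (Complex.I * (-(c:ℂ)) * x) * Complex.exp (-((1/(2*σ):ℝ):ℂ) * (x:ℂ) ^ 2)) := by
    funext x
    unfold gaussPDF1
    push_cast
    rw [show Complex.I * (-(c:ℂ)) * x = -Complex.I * x * c by ring,
        show -((1/(2*(σ:ℂ)))) * (x:ℂ) ^ 2 = -(x:ℂ)^2/(2*σ) by ring]
    ring
  rw [h1, integral_const_mul, key]
  have h2 : ((π : ℂ) / ((1/(2*σ):ℝ):ℂ)) = ((2*π*σ : ℝ) : ℂ) := by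
    push_cast
    field_simp
  have h3 : ((2*π*σ : ℝ) : ℂ) ^ (1/2 : ℂ) = ((Real.sqrt (2*π*σ) : ℝ) : ℂ) := by
    rw [show ((1/2 : ℂ)) = ((1/2 : ℝ) : ℂ) by norm_num, ← Complex.ofReal_cpow (by positivity),
      Real.sqrt_eq_rpow]
  rw [h2, h3, ← mul_assoc, ← Complex.ofReal_mul]
  have hS : (1 / Real.sqrt (2*π*σ)) * Real.sqrt (2*π*σ) = 1 := by
    have : Real.sqrt (2*π*σ) ≠ 0 := by positivity
    field_simp
  rw [hS, Complex.ofReal_one, one_mul]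
  have hσ' : (σ:ℂ) ≠ 0 := by exact_mod_cast hσ.ne'
  congr 1
  push_cast
  field_simp
  ring

lemma gauss1_fourier_shift {σ : ℝ} (hσ : 0 < σ) (c a : ℝ) :
    ∫ w : ℝ, Complex.exp (-Complex.I * w * c) * (gaussPDF1 σ (w - a) : ℂ)
      = Complex.exp (-Complex.I * a * c) * Complex.exp (-(σ * c ^ 2 / 2 : ℝ)) := by
  rw [← integral_add_right_eq_self
    (fun w : ℝ => Complex.exp (-Complex.I * w * c) * (gaussPDF1 σ (w - a) : ℂ)) a]
  have h : ∀ w : ℝ, Complex.exp (-Complex.I * ((w + a : ℝ) : ℂ) * c)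
        * (gaussPDF1 σ (w + a - a) : ℂ)
      = Complex.exp (-Complex.I * a * c)
        * (Complex.exp (-Complex.I * w * c) * (gaussPDF1 σ w : ℂ)) := by
    intro w
    rw [add_sub_cancel_right, show -Complex.I * ((w + a : ℝ) : ℂ) * c
        = (-Complex.I * a * c) + (-Complex.I * w * c) by push_cast; ring, Complex.exp_add]
    ring
  simp only [h]
  rw [integral_const_mul, gauss1_fourier hσ c]

lemma gauss2_eq {σii σjj σij : ℝ} (hii : 0 < σii) (hd : 0 < σii * σjj - σij ^ 2) (x w : ℝ) :
    gaussPDF2 σii σjj σij x w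
      = gaussPDF1 σii x * gaussPDF1 ((σii * σjj - σij ^ 2) / σii) (w - (σij / σii) * x) := by
  have hπ := Real.pi_pos
  unfold gaussPDF1 gaussPDF2
  rw [mul_mul_mul_comm, ← Real.exp_add]
  congr 1
  · rw [div_mul_div_comm, one_mul]
    congr 1
    rw [← Real.sqrt_mul (by positivity),
      show (2*π*σii) * (2*π*((σii*σjj-σij^2)/σii)) = (2*π)^2 * (σii*σjj-σij^2) by
        field_simp,
      Real.sqrt_mul (by positivity), Real.sqrt_sq (by positivity)]
  · congr 1
    obtain ⟨D, hD⟩ : ∃ D, D = σii * σjj - σij ^ 2 := ⟨_, rfl⟩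
    have hD0 : D ≠ 0 := hD ▸ hd.ne'
    have hσjj : σjj = (D + σij ^ 2) / σii := by
      rw [hD, sub_add_cancel, mul_div_cancel_left₀ _ hii.ne']
    rw [← hD, hσjj]
    field_simp [hii.ne', hD0]
    ring

lemma gauss2_continuous (σii σjj σij : ℝ) :
    Continuous (fun q : ℝ × ℝ => gaussPDF2 σii σjj σij q.1 q.2) := by
  unfold gaussPDF2; fun_prop

lemma gauss2_nonneg (σii σjj σij : ℝ) (x w : ℝ) : 0 ≤ gaussPDF2 σii σjj σij x w := by
  unfold gaussPDF2; positivity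

lemma gauss2_integrable {σii σjj σij : ℝ} (hii : 0 < σii) (hd : 0 < σii * σjj - σij ^ 2) :
    Integrable (fun q : ℝ × ℝ => gaussPDF2 σii σjj σij q.1 q.2)
      ((volume : Measure ℝ).prod (volume : Measure ℝ)) := by
  have hd' : 0 < (σii * σjj - σij ^ 2) / σii := by positivity
  refine (integrable_prod_iff ?_).mpr ⟨?_, ?_⟩
  · exact ((gauss2_continuous σii σjj σij).aestronglyMeasurable).mono_measure
      (le_of_eq (Measure.volume_eq_prod ℝ ℝ).symm)
  · filter_upwards with x
    simp only [gauss2_eq hii hd x]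
    exact ((gauss1_integrable hd').comp_sub_right ((σij / σii) * x)).const_mul _
  · have h : (fun x : ℝ => ∫ w : ℝ, ‖gaussPDF2 σii σjj σij x w‖)
        = fun x : ℝ => gaussPDF1 σii x * ∫ w : ℝ, gaussPDF1 ((σii * σjj - σij ^ 2) / σii) w := by
      funext x
      have h1 : ∀ w : ℝ, ‖gaussPDF2 σii σjj σij x w‖
          = gaussPDF1 σii x * gaussPDF1 ((σii * σjj - σij ^ 2) / σii) (w - (σij / σii) * x) := by
        intro w
        rw [gauss2_eq hii hd, Real.norm_of_nonneg (mul_nonneg (gauss1_nonneg _ _) (gauss1_nonneg _ _))]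
      simp only [h1]
      rw [integral_const_mul, integral_sub_right_eq_self]
    simp only [h]
    exact (gauss1_integrable hii).mul_const _

lemma gauss2_fourier {σii σjj σij : ℝ} (hii : 0 < σii) (hd : 0 < σii * σjj - σij ^ 2)
    (y z : ℝ) :
    ∫ q : ℝ × ℝ, Complex.exp (-Complex.I * q.1 * y) * Complex.exp (-Complex.I * q.2 * z) *
        (gaussPDF2 σii σjj σij q.1 q.2 : ℂ)
      = Complex.exp (-((σii * y ^ 2 + 2 * σij * y * z + σjj * z ^ 2) / 2 : ℝ)) := by
  have hd' : 0 < (σii * σjj - σij ^ 2) / σii := by positivity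
  have hint : Integrable (fun q : ℝ × ℝ =>
      Complex.exp (-Complex.I * q.1 * y) * Complex.exp (-Complex.I * q.2 * z) *
        (gaussPDF2 σii σjj σij q.1 q.2 : ℂ))
      ((volume : Measure ℝ).prod (volume : Measure ℝ)) := by
    refine Integrable.mono' ((gauss2_integrable hii hd)) ?_ ?_
    · exact ((Continuous.mul (by fun_prop) (Complex.continuous_ofReal.comp
        (gauss2_continuous σii σjj σij)))).aestronglyMeasurable
    · filter_upwards with q
      rw [norm_mul, norm_mul, normK, normK, Complex.norm_real,
        Real.norm_of_nonneg (gauss2_nonneg _ _ _ _ _)]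
      simp
  rw [Measure.volume_eq_prod, integral_prod _ hint]
  have hinner : ∀ x : ℝ, (∫ w : ℝ, Complex.exp (-Complex.I * x * y) *
        Complex.exp (-Complex.I * w * z) * (gaussPDF2 σii σjj σij x w : ℂ))
      = (Complex.exp (-Complex.I * x * ((y + (σij/σii) * z : ℝ) : ℂ)) * (gaussPDF1 σii x : ℂ)) *
        Complex.exp (-(((σii * σjj - σij ^ 2) / σii) * z ^ 2 / 2 : ℝ)) := by
    intro x
    have h1 : ∀ w : ℝ, Complex.exp (-Complex.I * x * y) *
          Complex.exp (-Complex.I * w * z) * (gaussPDF2 σii σjj σij x w : ℂ)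
        = (Complex.exp (-Complex.I * x * y) * (gaussPDF1 σii x : ℂ)) *
          (Complex.exp (-Complex.I * w * z) *
            (gaussPDF1 ((σii * σjj - σij ^ 2) / σii) (w - (σij / σii) * x) : ℂ)) := by
      intro w
      rw [gauss2_eq hii hd]
      push_cast
      ring
    simp only [h1]
    rw [integral_const_mul, gauss1_fourier_shift hd' z ((σij / σii) * x)]
    have h2 : Complex.exp (-Complex.I * ((((σij / σii) * x : ℝ)) : ℂ) * z) *
          Complex.exp (-Complex.I * (x:ℝ) * (y:ℝ))
        = Complex.exp (-Complex.I * (x:ℝ) * ((y + (σij/σii) * z : ℝ) : ℂ)) := by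
      rw [← Complex.exp_add]
      congr 1
      push_cast
      ring
    rw [← h2]
    ring
  simp only [hinner]
  rw [integral_mul_const, gauss1_fourier hii (y + (σij/σii) * z), ← Complex.exp_add]
  have hσ : (σii:ℂ) ≠ 0 := by exact_mod_cast hii.ne'
  congr 1
  push_cast
  field_simp
  ring

lemma mean_formula {σ : ℝ} (hσ : 0 < σ) {g : ℝ → ℂ} (hg : Integrable g) (f : ℝ → ℝ)
    (hf : ∀ x : ℝ, (f x : ℂ) =
      (1 / (2 * π) : ℝ) * ∫ y : ℝ, g y * Complex.exp (-Complex.I * x * y)) :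
    (transMean σ f : ℂ)
      = (1 / (2 * π) : ℝ) * ∫ y : ℝ, g y * Complex.exp (-(σ * y ^ 2 / 2 : ℝ)) := by
  unfold transMean
  rw [ofReal_integral']
  have h0 : ∀ x : ℝ, ((f x * gaussPDF1 σ x : ℝ) : ℂ)
      = ((1 / (2 * π) : ℝ) : ℂ) *
        ∫ y : ℝ, g y * Complex.exp (-Complex.I * x * y) * (gaussPDF1 σ x : ℂ) := by
    intro x
    rw [Complex.ofReal_mul, hf x, integral_mul_const]
    ring
  rw [integral_congr_ae (Filter.Eventually.of_forall h0), integral_const_mul]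
  congr 1
  have hF : Integrable (Function.uncurry fun (x y : ℝ) =>
      g y * Complex.exp (-Complex.I * x * y) * (gaussPDF1 σ x : ℂ))
      ((volume : Measure ℝ).prod (volume : Measure ℝ)) := by
    have hbd : Integrable (fun p : ℝ × ℝ => gaussPDF1 σ p.1 * ‖g p.2‖)
        ((volume : Measure ℝ).prod (volume : Measure ℝ)) :=
      (gauss1_integrable hσ).mul_prod hg.norm
    refine Integrable.mono' hbd ?_ ?_
    · exact ((hg.1.comp_snd.mul (Continuous.aestronglyMeasurable (by fun_prop)))).mul
        ((Complex.continuous_ofReal.comp ((gauss1_continuous σ).comp continuous_fst)).aestronglyMeasurable)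
    · filter_upwards with p
      rw [Function.uncurry]
      rw [norm_mul, norm_mul, normK, Complex.norm_real,
        Real.norm_of_nonneg (gauss1_nonneg _ _)]
      simp [mul_comm]
  rw [integral_integral_swap hF]
  refine integral_congr_ae (Filter.Eventually.of_forall fun y => ?_)
  have h1 : ∀ x : ℝ, g y * Complex.exp (-Complex.I * x * y) * (gaussPDF1 σ x : ℂ)
      = g y * (Complex.exp (-Complex.I * x * y) * (gaussPDF1 σ x : ℂ)) := fun x => by ring
  simp only [h1]
  rw [integral_const_mul, gauss1_fourier hσ y]

lemma main_formula {σii σjj σij : ℝ} (hii : 0 < σii) (hd : 0 < σii * σjj - σij ^ 2)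
    {g₁ g₂ : ℝ → ℂ} (hg₁ : Integrable g₁) (hg₂ : Integrable g₂)
    (f₁ f₂ : ℝ → ℝ)
    (hf₁ : ∀ x : ℝ, (f₁ x : ℂ) =
      (1 / (2 * π) : ℝ) * ∫ y : ℝ, g₁ y * Complex.exp (-Complex.I * x * y))
    (hf₂ : ∀ x : ℝ, (f₂ x : ℂ) =
      (1 / (2 * π) : ℝ) * ∫ y : ℝ, g₂ y * Complex.exp (-Complex.I * x * y)) :
    ((∫ q : ℝ × ℝ, f₁ q.1 * f₂ q.2 * gaussPDF2 σii σjj σij q.1 q.2 : ℝ) : ℂ)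
      = (1 / (4 * π ^ 2) : ℝ) * ∫ r : ℝ × ℝ, g₁ r.1 * g₂ r.2 *
          Complex.exp (-((σii * r.1 ^ 2 + 2 * σij * r.1 * r.2 + σjj * r.2 ^ 2) / 2 : ℝ)) := by
  have hπ : (π : ℂ) ≠ 0 := by exact_mod_cast Real.pi_ne_zero
  rw [ofReal_integral']
  have h0 : ∀ q : ℝ × ℝ, ((f₁ q.1 * f₂ q.2 * gaussPDF2 σii σjj σij q.1 q.2 : ℝ) : ℂ)
      = ((1 / (4 * π ^ 2) : ℝ) : ℂ) * ∫ r : ℝ × ℝ,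
          g₁ r.1 * Complex.exp (-Complex.I * q.1 * r.1) *
            (g₂ r.2 * Complex.exp (-Complex.I * q.2 * r.2)) *
          (gaussPDF2 σii σjj σij q.1 q.2 : ℂ) := by
    intro q
    calc ((f₁ q.1 * f₂ q.2 * gaussPDF2 σii σjj σij q.1 q.2 : ℝ) : ℂ)
        = ((f₁ q.1 : ℝ) : ℂ) * ((f₂ q.2 : ℝ) : ℂ) * ((gaussPDF2 σii σjj σij q.1 q.2 : ℝ) : ℂ) := by
          push_cast; ring
      _ = ((1 / (4 * π ^ 2) : ℝ) : ℂ) *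
          (((∫ y : ℝ, g₁ y * Complex.exp (-Complex.I * q.1 * y)) *
            ∫ z : ℝ, g₂ z * Complex.exp (-Complex.I * q.2 * z)) *
            (gaussPDF2 σii σjj σij q.1 q.2 : ℂ)) := by
          rw [hf₁ q.1, hf₂ q.2]
          have hc : ((1 / (2 * π) : ℝ) : ℂ) * ((1 / (2 * π) : ℝ) : ℂ)
              = ((1 / (4 * π ^ 2) : ℝ) : ℂ) := by
            push_cast
            field_simp
            ring
          rw [← hc]
          ring
      _ = ((1 / (4 * π ^ 2) : ℝ) : ℂ) *
          ((∫ r : ℝ × ℝ, g₁ r.1 * Complex.exp (-Complex.I * q.1 * r.1) *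
            (g₂ r.2 * Complex.exp (-Complex.I * q.2 * r.2))) *
            (gaussPDF2 σii σjj σij q.1 q.2 : ℂ)) := by
          rw [Measure.volume_eq_prod, ← integral_prod_mul]
      _ = ((1 / (4 * π ^ 2) : ℝ) : ℂ) * ∫ r : ℝ × ℝ,
          g₁ r.1 * Complex.exp (-Complex.I * q.1 * r.1) *
            (g₂ r.2 * Complex.exp (-Complex.I * q.2 * r.2)) *
          (gaussPDF2 σii σjj σij q.1 q.2 : ℂ) := by
          rw [integral_mul_const]
  rw [integral_congr_ae (Filter.Eventually.of_forall h0), integral_const_mul]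
  congr 1
  have hH : Integrable (Function.uncurry fun (q r : ℝ × ℝ) =>
      g₁ r.1 * Complex.exp (-Complex.I * q.1 * r.1) *
        (g₂ r.2 * Complex.exp (-Complex.I * q.2 * r.2)) *
        (gaussPDF2 σii σjj σij q.1 q.2 : ℂ))
      ((volume : Measure (ℝ × ℝ)).prod (volume : Measure (ℝ × ℝ))) := by
    have h1 : Integrable (fun r : ℝ × ℝ => ‖g₁ r.1‖ * ‖g₂ r.2‖) (volume : Measure (ℝ × ℝ)) := by
      rw [Measure.volume_eq_prod]; exact hg₁.norm.mul_prod hg₂.norm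
    have h2 : Integrable (fun q : ℝ × ℝ => gaussPDF2 σii σjj σij q.1 q.2)
        (volume : Measure (ℝ × ℝ)) := by
      rw [Measure.volume_eq_prod]; exact gauss2_integrable hii hd
    refine (h2.mul_prod h1).mono' ?_ ?_
    · have a1 : AEStronglyMeasurable (fun p : (ℝ × ℝ) × (ℝ × ℝ) => g₁ p.2.1)
          ((volume : Measure (ℝ × ℝ)).prod (volume : Measure (ℝ × ℝ))) := by
        have := (hg₁.1.comp_fst (ν := (volume : Measure ℝ))).comp_snd
          (μ := (volume : Measure (ℝ × ℝ)))
        rwa [← Measure.volume_eq_prod] at this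
      have a2 : AEStronglyMeasurable (fun p : (ℝ × ℝ) × (ℝ × ℝ) => g₂ p.2.2)
          ((volume : Measure (ℝ × ℝ)).prod (volume : Measure (ℝ × ℝ))) := by
        have := (hg₂.1.comp_snd (μ := (volume : Measure ℝ))).comp_snd
          (μ := (volume : Measure (ℝ × ℝ)))
        rwa [← Measure.volume_eq_prod] at this
      have c1 : Continuous (fun p : (ℝ × ℝ) × (ℝ × ℝ) =>
          Complex.exp (-Complex.I * p.1.1 * p.2.1)) := by fun_prop
      have c2 : Continuous (fun p : (ℝ × ℝ) × (ℝ × ℝ) =>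
          Complex.exp (-Complex.I * p.1.2 * p.2.2)) := by fun_prop
      have cP : Continuous (fun p : (ℝ × ℝ) × (ℝ × ℝ) =>
          ((gaussPDF2 σii σjj σij p.1.1 p.1.2 : ℝ) : ℂ)) :=
        Complex.continuous_ofReal.comp ((gauss2_continuous σii σjj σij).comp continuous_fst)
      exact (((a1.mul c1.aestronglyMeasurable).mul
        (a2.mul c2.aestronglyMeasurable)).mul cP.aestronglyMeasurable)
    · filter_upwards with p
      rw [Function.uncurry]
      rw [norm_mul, norm_mul, norm_mul, norm_mul, normK, normK, Complex.norm_real,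
        Real.norm_of_nonneg (gauss2_nonneg _ _ _ _ _)]
      exact le_of_eq (by ring)
  rw [integral_integral_swap hH]
  refine integral_congr_ae (Filter.Eventually.of_forall fun r => ?_)
  have h1 : ∀ q : ℝ × ℝ, g₁ r.1 * Complex.exp (-Complex.I * q.1 * r.1) *
        (g₂ r.2 * Complex.exp (-Complex.I * q.2 * r.2)) *
        (gaussPDF2 σii σjj σij q.1 q.2 : ℂ)
      = (g₁ r.1 * g₂ r.2) * (Complex.exp (-Complex.I * q.1 * r.1) *
          Complex.exp (-Complex.I * q.2 * r.2) * (gaussPDF2 σii σjj σij q.1 q.2 : ℂ)) :=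
    fun q => by ring
  simp only [h1]
  rw [integral_const_mul, gauss2_fourier hii hd r.1 r.2, mul_assoc]

theorem transformed_covariance_fourier
    (σii σjj σij : ℝ) (hii : 0 < σii) (hjj : 0 < σjj)
    (hd : 0 < σii * σjj - σij ^ 2)
    (g₁ g₂ : ℝ → ℂ) (hg₁ : Integrable g₁) (hg₂ : Integrable g₂)
    (N : ℝ) (hb₁ : ∀ y, ‖g₁ y‖ ≤ N) (hb₂ : ∀ y, ‖g₂ y‖ ≤ N)
    (f₁ f₂ : ℝ → ℝ)
    (hf₁ : ∀ x : ℝ, (f₁ x : ℂ) =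
      (1 / (2 * π) : ℝ) * ∫ y : ℝ, g₁ y * Complex.exp (-Complex.I * x * y))
    (hf₂ : ∀ x : ℝ, (f₂ x : ℂ) =
      (1 / (2 * π) : ℝ) * ∫ y : ℝ, g₂ y * Complex.exp (-Complex.I * x * y)) :
    (transCov σii σjj σij f₁ f₂ : ℂ) =
      (1 / (4 * π ^ 2) : ℝ) *
        ∫ q : ℝ × ℝ, g₁ q.1 * g₂ q.2 *
          (Complex.exp (-(q.1 * q.2 * σij : ℝ)) - 1) *
          Complex.exp (-((q.1 ^ 2 * σii + q.2 ^ 2 * σjj) / 2 : ℝ)) := by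
  have hπ : (π : ℂ) ≠ 0 := by exact_mod_cast Real.pi_ne_zero
  unfold transCov
  rw [Complex.ofReal_sub, Complex.ofReal_mul]
  rw [main_formula hii hd hg₁ hg₂ f₁ f₂ hf₁ hf₂,
      mean_formula hii hg₁ f₁ hf₁, mean_formula hjj hg₂ f₂ hf₂]
  have hc : ((1 / (2 * π) : ℝ) : ℂ) * ((1 / (2 * π) : ℝ) : ℂ)
      = ((1 / (4 * π ^ 2) : ℝ) : ℂ) := by
    push_cast
    field_simp
    ring
  have hprod : (((1 / (2 * π) : ℝ) : ℂ) *
        ∫ y : ℝ, g₁ y * Complex.exp (-(σii * y ^ 2 / 2 : ℝ))) *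
      (((1 / (2 * π) : ℝ) : ℂ) *
        ∫ z : ℝ, g₂ z * Complex.exp (-(σjj * z ^ 2 / 2 : ℝ)))
      = ((1 / (4 * π ^ 2) : ℝ) : ℂ) * ∫ r : ℝ × ℝ,
          g₁ r.1 * Complex.exp (-(σii * r.1 ^ 2 / 2 : ℝ)) *
            (g₂ r.2 * Complex.exp (-(σjj * r.2 ^ 2 / 2 : ℝ))) := by
    have hp2 := integral_prod_mul (μ := (volume : Measure ℝ)) (ν := (volume : Measure ℝ))
      (fun y => g₁ y * Complex.exp (-(σii * y ^ 2 / 2 : ℝ)))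
      (fun z => g₂ z * Complex.exp (-(σjj * z ^ 2 / 2 : ℝ)))
    calc (((1 / (2 * π) : ℝ) : ℂ) *
        ∫ y : ℝ, g₁ y * Complex.exp (-(σii * y ^ 2 / 2 : ℝ))) *
      (((1 / (2 * π) : ℝ) : ℂ) *
        ∫ z : ℝ, g₂ z * Complex.exp (-(σjj * z ^ 2 / 2 : ℝ)))
        = ((1 / (4 * π ^ 2) : ℝ) : ℂ) *
          ((∫ y : ℝ, g₁ y * Complex.exp (-(σii * y ^ 2 / 2 : ℝ))) *
            ∫ z : ℝ, g₂ z * Complex.exp (-(σjj * z ^ 2 / 2 : ℝ))) := by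
          rw [← hc]; ring
      _ = ((1 / (4 * π ^ 2) : ℝ) : ℂ) * ∫ r : ℝ × ℝ,
          g₁ r.1 * Complex.exp (-(σii * r.1 ^ 2 / 2 : ℝ)) *
            (g₂ r.2 * Complex.exp (-(σjj * r.2 ^ 2 / 2 : ℝ))) := by
          rw [← hp2, ← Measure.volume_eq_prod]
  rw [hprod, ← mul_sub]
  congr 1
  have hB1 : Integrable (fun y : ℝ => g₁ y * Complex.exp (-(σii * y ^ 2 / 2 : ℝ))) := by
    refine hg₁.norm.mono' (hg₁.1.mul (Continuous.aestronglyMeasurable (by fun_prop))) ?_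
    filter_upwards with y
    have hn : ‖Complex.exp (-((σii * y ^ 2 / 2 : ℝ)) : ℂ)‖ = Real.exp (-(σii * y ^ 2 / 2)) := by
      rw [Complex.norm_exp]
      simp [← Complex.ofReal_pow]
    rw [norm_mul, hn]
    have h1 : Real.exp (-(σii * y ^ 2 / 2)) ≤ 1 :=
      Real.exp_le_one_iff.mpr (by nlinarith [sq_nonneg y, hii.le])
    calc ‖g₁ y‖ * Real.exp (-(σii * y ^ 2 / 2)) ≤ ‖g₁ y‖ * 1 :=
          mul_le_mul_of_nonneg_left h1 (norm_nonneg _)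
      _ = ‖g₁ y‖ := mul_one _
  have hB2 : Integrable (fun z : ℝ => g₂ z * Complex.exp (-(σjj * z ^ 2 / 2 : ℝ))) := by
    refine hg₂.norm.mono' (hg₂.1.mul (Continuous.aestronglyMeasurable (by fun_prop))) ?_
    filter_upwards with z
    have hn : ‖Complex.exp (-((σjj * z ^ 2 / 2 : ℝ)) : ℂ)‖ = Real.exp (-(σjj * z ^ 2 / 2)) := by
      rw [Complex.norm_exp]
      simp [← Complex.ofReal_pow]
    rw [norm_mul, hn]
    have h1 : Real.exp (-(σjj * z ^ 2 / 2)) ≤ 1 :=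
      Real.exp_le_one_iff.mpr (by nlinarith [sq_nonneg z, hjj.le])
    calc ‖g₂ z‖ * Real.exp (-(σjj * z ^ 2 / 2)) ≤ ‖g₂ z‖ * 1 :=
          mul_le_mul_of_nonneg_left h1 (norm_nonneg _)
      _ = ‖g₂ z‖ := mul_one _
  have hB : Integrable (fun r : ℝ × ℝ =>
      g₁ r.1 * Complex.exp (-(σii * r.1 ^ 2 / 2 : ℝ)) *
        (g₂ r.2 * Complex.exp (-(σjj * r.2 ^ 2 / 2 : ℝ)))) (volume : Measure (ℝ × ℝ)) := by
    rw [Measure.volume_eq_prod]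
    exact hB1.mul_prod hB2
  have h1 : Integrable (fun r : ℝ × ℝ => ‖g₁ r.1‖ * ‖g₂ r.2‖) (volume : Measure (ℝ × ℝ)) := by
    rw [Measure.volume_eq_prod]; exact hg₁.norm.mul_prod hg₂.norm
  have a1 : AEStronglyMeasurable (fun r : ℝ × ℝ => g₁ r.1) (volume : Measure (ℝ × ℝ)) := by
    have := hg₁.1.comp_fst (ν := (volume : Measure ℝ))
    rwa [← Measure.volume_eq_prod] at this
  have a2 : AEStronglyMeasurable (fun r : ℝ × ℝ => g₂ r.2) (volume : Measure (ℝ × ℝ)) := by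
    have := hg₂.1.comp_snd (μ := (volume : Measure ℝ))
    rwa [← Measure.volume_eq_prod] at this
  have hA : Integrable (fun r : ℝ × ℝ => g₁ r.1 * g₂ r.2 *
      Complex.exp (-((σii * r.1 ^ 2 + 2 * σij * r.1 * r.2 + σjj * r.2 ^ 2) / 2 : ℝ)))
      (volume : Measure (ℝ × ℝ)) := by
    refine h1.mono' ?_ ?_
    · exact (a1.mul a2).mul (Continuous.aestronglyMeasurable (by fun_prop))
    · filter_upwards with r
      have hn : ‖Complex.exp (-(((σii * r.1 ^ 2 + 2 * σij * r.1 * r.2 + σjj * r.2 ^ 2) / 2 : ℝ)) : ℂ)‖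
          = Real.exp (-((σii * r.1 ^ 2 + 2 * σij * r.1 * r.2 + σjj * r.2 ^ 2) / 2)) := by
        rw [Complex.norm_exp]
        simp [← Complex.ofReal_pow]
      rw [norm_mul, norm_mul, hn]
      have hQ : 0 ≤ (σii * r.1 ^ 2 + 2 * σij * r.1 * r.2 + σjj * r.2 ^ 2) / 2 := by
        nlinarith [sq_nonneg (σii * r.1 + σij * r.2), mul_nonneg hd.le (sq_nonneg r.2),
          mul_pos hii hii, sq_nonneg r.1, sq_nonneg r.2, hii]
      have h2 : Real.exp (-((σii * r.1 ^ 2 + 2 * σij * r.1 * r.2 + σjj * r.2 ^ 2) / 2)) ≤ 1 :=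
        Real.exp_le_one_iff.mpr (by linarith)
      calc ‖g₁ r.1‖ * ‖g₂ r.2‖ * Real.exp (-((σii * r.1 ^ 2 + 2 * σij * r.1 * r.2 + σjj * r.2 ^ 2) / 2))
          ≤ ‖g₁ r.1‖ * ‖g₂ r.2‖ * 1 :=
            mul_le_mul_of_nonneg_left h2 (by positivity)
        _ = ‖g₁ r.1‖ * ‖g₂ r.2‖ := by simp
  rw [← integral_sub hA hB]
  refine (integral_congr_ae (Filter.Eventually.of_forall fun r => ?_)).symm
  have e1 : Complex.exp (-((σii * r.1 ^ 2 + 2 * σij * r.1 * r.2 + σjj * r.2 ^ 2) / 2 : ℝ))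
      = Complex.exp (-(r.1 * r.2 * σij : ℝ)) *
        Complex.exp (-((r.1 ^ 2 * σii + r.2 ^ 2 * σjj) / 2 : ℝ)) := by
    rw [← Complex.exp_add]
    congr 1
    push_cast
    ring
  have e2 : Complex.exp (-(σii * r.1 ^ 2 / 2 : ℝ)) * Complex.exp (-(σjj * r.2 ^ 2 / 2 : ℝ))
      = Complex.exp (-((r.1 ^ 2 * σii + r.2 ^ 2 * σjj) / 2 : ℝ)) := by
    rw [← Complex.exp_add]
    congr 1
    push_cast
    ring
  rw [e1, ← e2]
  ring
end

section
/- The transformed covariance of cosine under a centered bivariate Gaussian satisfies τ(cos, cos) = e^{−(σii+σjj)/2}·(cosh σij − 1); equivalently, ∫_{ℝ²} cos(x)·cos(w)·p(x,w) dx dw − e^{−σii/2}·e^{−σjj/2} = e^{−(σii+σjj)/2}·(cosh σij − 1). -/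
open MeasureTheory Real

section Aux

open Complex in
lemma cos_exp_int (b t : ℝ) (hb : 0 < b) :
    ∫ x : ℝ, Real.cos (t * x) * Real.exp (-b * x ^ 2)
      = Real.sqrt (π / b) * Real.exp (-t ^ 2 / (4 * b)) ∧
    ∫ x : ℝ, Real.sin (t * x) * Real.exp (-b * x ^ 2) = 0 := by
  have hbre : 0 < (b : ℂ).re := by simpa using hb
  have key := fourierIntegral_gaussian hbre (t : ℂ)
  have hint : Integrable (fun x : ℝ => Complex.exp (I * t * x) * Complex.exp (-b * x ^ 2)) := by
    have h := integrable_cexp_quadratic hbre (I * t) 0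
    refine h.congr (Filter.Eventually.of_forall fun x => ?_)
    simp only [← Complex.exp_add]; congr 1; ring
  have hπb : (0:ℝ) ≤ π / b := div_nonneg pi_pos.le hb.le
  have hRHS : ((π:ℂ) / b) ^ (1 / 2 : ℂ) * Complex.exp (-(t:ℂ) ^ 2 / (4 * b))
      = ((Real.sqrt (π / b) * Real.exp (-t ^ 2 / (4 * b)) : ℝ) : ℂ) := by
    rw [Real.sqrt_eq_rpow]
    push_cast
    rw [Complex.ofReal_cpow hπb]
    push_cast
    norm_num
  rw [hRHS] at key
  have hcongr : ∀ x : ℝ, Complex.exp (I * t * x) * Complex.exp (-b * x ^ 2)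
      = (↑(Real.cos (t*x)) + ↑(Real.sin (t*x)) * I) * ↑(Real.exp (-b * x ^ 2)) := by
    intro x
    rw [show I * (t:ℂ) * x = ((t*x : ℝ):ℂ) * I by push_cast; ring, Complex.exp_mul_I,
      show (-(b:ℂ) * x ^ 2) = ((-b * x ^ 2 : ℝ):ℂ) by push_cast; ring,
      ← Complex.ofReal_exp, ← Complex.ofReal_cos, ← Complex.ofReal_sin]
  have hre := integral_re hint
  have him := integral_im hint
  rw [key] at hre him
  have hre' : ∀ x : ℝ, RCLike.re (Complex.exp (I * t * x) * Complex.exp (-b * x ^ 2))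
      = Real.cos (t * x) * Real.exp (-b * x ^ 2) := by
    intro x; rw [hcongr x]
    simp only [RCLike.re_to_complex, Complex.mul_re, Complex.add_re, Complex.ofReal_re,
      Complex.mul_im, Complex.add_im, Complex.ofReal_im, Complex.I_re, Complex.I_im]
    ring
  have him' : ∀ x : ℝ, RCLike.im (Complex.exp (I * t * x) * Complex.exp (-b * x ^ 2))
      = Real.sin (t * x) * Real.exp (-b * x ^ 2) := by
    intro x; rw [hcongr x]
    simp only [RCLike.im_to_complex, Complex.mul_re, Complex.add_re, Complex.ofReal_re,
      Complex.mul_im, Complex.add_im, Complex.ofReal_im, Complex.I_re, Complex.I_im]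
    ring
  simp only [hre', RCLike.re_to_complex, Complex.ofReal_re] at hre
  simp only [him', RCLike.im_to_complex, Complex.ofReal_im] at him
  exact ⟨hre, him⟩

lemma gaussPDF1_eq (s : ℝ) (x : ℝ) :
    gaussPDF1 s x = (1 / Real.sqrt (2 * π * s)) * Real.exp (-(1/(2*s)) * x ^ 2) := by
  unfold gaussPDF1; congr 2; ring

lemma gaussPDF1_nonneg (s x : ℝ) : 0 ≤ gaussPDF1 s x := by
  unfold gaussPDF1; positivity

lemma gaussPDF1_cont (s : ℝ) : Continuous (gaussPDF1 s) := by
  unfold gaussPDF1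
  exact continuous_const.mul (Real.continuous_exp.comp (by continuity))

lemma gaussPDF1_integrable (s : ℝ) (hs : 0 < s) : Integrable (gaussPDF1 s) := by
  have : Integrable (fun x : ℝ => Real.exp (-(1/(2*s)) * x ^ 2)) :=
    integrable_exp_neg_mul_sq (by positivity)
  have h2 := this.const_mul (1 / Real.sqrt (2 * π * s))
  exact h2.congr (Filter.Eventually.of_forall fun x => (gaussPDF1_eq s x).symm)

lemma cos_gauss_integrable (s t : ℝ) (hs : 0 < s) :
    Integrable (fun x : ℝ => Real.cos (t * x) * gaussPDF1 s x) :=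
  (gaussPDF1_integrable s hs).bdd_mul
    ((Real.continuous_cos.comp (continuous_const.mul continuous_id)).aestronglyMeasurable)
    (c := 1) (Filter.Eventually.of_forall fun x => by simpa using Real.abs_cos_le_one (t * x))

lemma sin_gauss_integrable (s t : ℝ) (hs : 0 < s) :
    Integrable (fun x : ℝ => Real.sin (t * x) * gaussPDF1 s x) :=
  (gaussPDF1_integrable s hs).bdd_mul
    ((Real.continuous_sin.comp (continuous_const.mul continuous_id)).aestronglyMeasurable)
    (c := 1) (Filter.Eventually.of_forall fun x => by simpa using Real.abs_sin_le_one (t * x))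

lemma cos_mul_gauss (s t : ℝ) (hs : 0 < s) :
    ∫ x : ℝ, Real.cos (t * x) * gaussPDF1 s x = Real.exp (-t ^ 2 * s / 2) := by
  have hb : 0 < 1/(2*s) := by positivity
  have key := (cos_exp_int (1/(2*s)) t hb).1
  have hsq : Real.sqrt (π / (1/(2*s))) = Real.sqrt (2 * π * s) := by
    congr 1; field_simp
  have hexp : Real.exp (-t ^ 2 / (4 * (1/(2*s)))) = Real.exp (-t ^ 2 * s / 2) := by
    congr 1; field_simp; ring
  have h2πs : (0:ℝ) < 2 * π * s := by positivity
  calc ∫ x : ℝ, Real.cos (t * x) * gaussPDF1 s x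
      = ∫ x : ℝ, (1 / Real.sqrt (2 * π * s)) * (Real.cos (t * x) * Real.exp (-(1/(2*s)) * x ^ 2)) := by
        congr 1; ext x; rw [gaussPDF1_eq s x]; ring
    _ = (1 / Real.sqrt (2 * π * s)) * ∫ x : ℝ, Real.cos (t * x) * Real.exp (-(1/(2*s)) * x ^ 2) :=
        integral_const_mul _ _
    _ = Real.exp (-t ^ 2 * s / 2) := by
        rw [key, hsq, hexp]
        rw [one_div, inv_mul_cancel_left₀ (Real.sqrt_ne_zero'.mpr h2πs)]

lemma sin_mul_gauss (s t : ℝ) (hs : 0 < s) :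
    ∫ x : ℝ, Real.sin (t * x) * gaussPDF1 s x = 0 := by
  have hb : 0 < 1/(2*s) := by positivity
  have key := (cos_exp_int (1/(2*s)) t hb).2
  calc ∫ x : ℝ, Real.sin (t * x) * gaussPDF1 s x
      = ∫ x : ℝ, (1 / Real.sqrt (2 * π * s)) * (Real.sin (t * x) * Real.exp (-(1/(2*s)) * x ^ 2)) := by
        congr 1; ext x; rw [gaussPDF1_eq s x]; ring
    _ = (1 / Real.sqrt (2 * π * s)) * ∫ x : ℝ, Real.sin (t * x) * Real.exp (-(1/(2*s)) * x ^ 2) :=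
        integral_const_mul _ _
    _ = 0 := by rw [key, mul_zero]

lemma cos_gauss_shift (s m : ℝ) (hs : 0 < s) :
    ∫ w : ℝ, Real.cos w * gaussPDF1 s (w - m) = Real.exp (-s / 2) * Real.cos m := by
  have h1 : ∫ w : ℝ, Real.cos w * gaussPDF1 s (w - m)
      = ∫ y : ℝ, Real.cos (y + m) * gaussPDF1 s y := by
    rw [← integral_sub_right_eq_self (fun y : ℝ => Real.cos (y + m) * gaussPDF1 s y) m]
    congr 1; ext w; simp
  rw [h1]
  have h2 : ∀ y : ℝ, Real.cos (y + m) * gaussPDF1 s y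
      = Real.cos m * (Real.cos (1 * y) * gaussPDF1 s y)
        - Real.sin m * (Real.sin (1 * y) * gaussPDF1 s y) := by
    intro y; rw [Real.cos_add]; ring_nf
  simp_rw [h2]
  rw [integral_sub ((cos_gauss_integrable s 1 hs).const_mul _)
      ((sin_gauss_integrable s 1 hs).const_mul _),
    integral_const_mul, integral_const_mul, cos_mul_gauss s 1 hs, sin_mul_gauss s 1 hs]
  ring_nf

end Aux

section TwoDim

variable (σii σjj σij : ℝ) (hii : 0 < σii) (hjj : 0 < σjj)
  (hd : 0 < σii * σjj - σij ^ 2)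

lemma gaussPDF2_factor (hii : 0 < σii) (hd : 0 < σii * σjj - σij ^ 2) (x w : ℝ) :
    gaussPDF2 σii σjj σij x w
      = gaussPDF1 σii x * gaussPDF1 ((σii * σjj - σij ^ 2)/σii) (w - (σij/σii) * x) := by
  set d := σii * σjj - σij ^ 2 with hdd
  have hii' : σii ≠ 0 := hii.ne'
  have hd' : d ≠ 0 := hd.ne'
  have hs : (0:ℝ) < d / σii := div_pos hd hii
  unfold gaussPDF2 gaussPDF1
  have hconst : Real.sqrt (2 * π * σii) * Real.sqrt (2 * π * (d/σii)) = 2 * π * Real.sqrt d := by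
    rw [← Real.sqrt_mul (by positivity)]
    rw [show 2 * π * σii * (2 * π * (d/σii)) = (2*π)^2 * d by field_simp]
    rw [Real.sqrt_mul (sq_nonneg _), Real.sqrt_sq (by positivity)]
  have hexp : Real.exp (-(σjj * x ^ 2 - 2 * σij * x * w + σii * w ^ 2) / (2 * d))
      = Real.exp (-x ^ 2 / (2 * σii)) * Real.exp (-(w - σij/σii * x) ^ 2 / (2 * (d/σii))) := by
    rw [← Real.exp_add]
    congr 1
    field_simp
    ring
  rw [hexp, ← hconst]
  field_simp

lemma gaussPDF2_int (hii : 0 < σii) (hd : 0 < σii * σjj - σij ^ 2) :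
    Integrable (fun q : ℝ × ℝ => gaussPDF2 σii σjj σij q.1 q.2) := by
  set s := (σii * σjj - σij ^ 2)/σii with hss
  have hs : 0 < s := div_pos hd hii
  have hcontG : Continuous (fun q : ℝ × ℝ => gaussPDF1 σii q.1 * gaussPDF1 s (q.2 - (σij/σii) * q.1)) := by
    exact ((gaussPDF1_cont σii).comp continuous_fst).mul
      ((gaussPDF1_cont s).comp (continuous_snd.sub (continuous_const.mul continuous_fst)))
  have hG : Integrable (fun q : ℝ × ℝ => gaussPDF1 σii q.1 * gaussPDF1 s (q.2 - (σij/σii) * q.1)) := by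
    rw [Measure.volume_eq_prod]
    rw [integrable_prod_iff hcontG.aestronglyMeasurable]
    constructor
    · refine Filter.Eventually.of_forall fun x => ?_
      exact ((gaussPDF1_integrable s hs).comp_sub_right ((σij/σii) * x)).const_mul (gaussPDF1 σii x)
    · have hKint := (gaussPDF1_integrable σii hii).const_mul (∫ y : ℝ, gaussPDF1 s y)
      refine hKint.congr (Filter.Eventually.of_forall fun x => ?_)
      calc (∫ y : ℝ, gaussPDF1 s y) * gaussPDF1 σii x
          = gaussPDF1 σii x * ∫ w : ℝ, gaussPDF1 s (w - (σij/σii) * x) := by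
            rw [integral_sub_right_eq_self (gaussPDF1 s) ((σij/σii) * x)]; ring
        _ = ∫ w : ℝ, gaussPDF1 σii x * gaussPDF1 s (w - (σij/σii) * x) :=
            (integral_const_mul _ _).symm
        _ = ∫ w : ℝ, ‖gaussPDF1 σii x * gaussPDF1 s (w - (σij/σii) * x)‖ := by
            congr 1; ext w
            rw [Real.norm_eq_abs, abs_of_nonneg (mul_nonneg (gaussPDF1_nonneg _ _) (gaussPDF1_nonneg _ _))]
  refine hG.congr (Filter.Eventually.of_forall fun q => ?_)
  exact (gaussPDF2_factor σii σjj σij hii hd q.1 q.2).symm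

end TwoDim

lemma main_integral (σii σjj σij : ℝ) (hii : 0 < σii) (hjj : 0 < σjj)
    (hd : 0 < σii * σjj - σij ^ 2) :
    ∫ q : ℝ × ℝ, Real.cos q.1 * Real.cos q.2 * gaussPDF2 σii σjj σij q.1 q.2
      = Real.exp (-(σii + σjj) / 2) * Real.cosh σij := by
  set a := σij/σii with ha
  set s := (σii * σjj - σij ^ 2)/σii with hss
  have hs : 0 < s := div_pos hd hii
  have hii' : σii ≠ 0 := hii.ne'
  have hfact := gaussPDF2_factor σii σjj σij hii hd
  have hp := gaussPDF2_int σii σjj σij hii hd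
  have hbdd : ∀ q : ℝ × ℝ, ‖Real.cos q.1 * Real.cos q.2‖ ≤ 1 := by
    intro q
    rw [norm_mul]
    exact mul_le_one₀ (by simpa using Real.abs_cos_le_one q.1) (norm_nonneg _)
      (by simpa using Real.abs_cos_le_one q.2)
  have hf : Integrable (fun q : ℝ × ℝ => Real.cos q.1 * Real.cos q.2 * gaussPDF2 σii σjj σij q.1 q.2) := by
    refine hp.bdd_mul ?_ (Filter.Eventually.of_forall hbdd)
    exact ((Real.continuous_cos.comp continuous_fst).mul
      (Real.continuous_cos.comp continuous_snd)).aestronglyMeasurable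
  rw [Measure.volume_eq_prod] at hf ⊢
  rw [integral_prod _ hf]
  have hinner : ∀ x : ℝ, (∫ w : ℝ, Real.cos x * Real.cos w * gaussPDF2 σii σjj σij x w)
      = (Real.exp (-s/2) * (Real.cos x * Real.cos (a * x))) * gaussPDF1 σii x := by
    intro x
    have : ∀ w : ℝ, Real.cos x * Real.cos w * gaussPDF2 σii σjj σij x w
        = (Real.cos x * gaussPDF1 σii x) * (Real.cos w * gaussPDF1 s (w - a * x)) := by
      intro w; rw [hfact x w]; ring
    simp_rw [this]
    rw [integral_const_mul, cos_gauss_shift s (a*x) hs]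
    ring
  simp_rw [hinner]
  have trig : ∀ x : ℝ, Real.exp (-s/2) * (Real.cos x * Real.cos (a * x)) * gaussPDF1 σii x
      = (Real.exp (-s/2)/2) * (Real.cos ((1+a) * x) * gaussPDF1 σii x)
        + (Real.exp (-s/2)/2) * (Real.cos ((1-a) * x) * gaussPDF1 σii x) := by
    intro x
    have : Real.cos x * Real.cos (a * x)
        = (Real.cos ((1+a) * x) + Real.cos ((1-a) * x))/2 := by
      rw [show (1+a) * x = x + a*x by ring, show (1-a) * x = x - a*x by ring,
        Real.cos_add, Real.cos_sub]
      ring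
    rw [this]; ring
  simp_rw [trig]
  rw [integral_add ((cos_gauss_integrable σii (1+a) hii).const_mul _)
      ((cos_gauss_integrable σii (1-a) hii).const_mul _),
    integral_const_mul, integral_const_mul,
    cos_mul_gauss σii (1+a) hii, cos_mul_gauss σii (1-a) hii]
  have e1 : Real.exp (-s/2) / 2 * Real.exp (-(1+a)^2 * σii / 2)
      = Real.exp (-(σii + σjj)/2) * Real.exp (-σij) / 2 := by
    rw [div_mul_eq_mul_div, ← Real.exp_add, ← Real.exp_add]
    congr 2
    rw [hss, ha]
    field_simp
    ring
  have e2 : Real.exp (-s/2) / 2 * Real.exp (-(1-a)^2 * σii / 2)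
      = Real.exp (-(σii + σjj)/2) * Real.exp σij / 2 := by
    rw [div_mul_eq_mul_div, ← Real.exp_add, ← Real.exp_add]
    congr 2
    rw [hss, ha]
    field_simp
    ring
  rw [e1, e2, Real.cosh_eq]
  ring

theorem transformed_covariance_cos
    (σii σjj σij : ℝ) (hii : 0 < σii) (hjj : 0 < σjj)
    (hd : 0 < σii * σjj - σij ^ 2) :
    transCov σii σjj σij Real.cos Real.cos =
      Real.exp (-(σii + σjj) / 2) * (Real.cosh σij - 1) ∧
    (∫ q : ℝ × ℝ, Real.cos q.1 * Real.cos q.2 * gaussPDF2 σii σjj σij q.1 q.2) -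
        Real.exp (-σii / 2) * Real.exp (-σjj / 2) =
      Real.exp (-(σii + σjj) / 2) * (Real.cosh σij - 1) := by
  have hmean : ∀ σ : ℝ, 0 < σ → transMean σ Real.cos = Real.exp (-σ / 2) := by
    intro σ hσ
    have h := cos_mul_gauss σ 1 hσ
    simp only [one_mul, one_pow] at h
    unfold transMean
    rw [h]
    norm_num
  have hmain := main_integral σii σjj σij hii hjj hd
  have hprod : Real.exp (-σii / 2) * Real.exp (-σjj / 2) = Real.exp (-(σii + σjj) / 2) := by
    rw [← Real.exp_add]; congr 1; ring
  constructor
  · unfold transCov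
    rw [hmain, hmean σii hii, hmean σjj hjj, hprod]
    ring
  · rw [hmain, hprod]
    ring
end
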